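/- Assume char F ≠ 2. Let f be a derivation of N and let i, j satisfy 1 ≤ i, i+1 < j ≤ t. Then for every A ∈ N^{ij} and all indices r, s, the entry f(A) r s is zero unless either (b r = i and b s ≥ j) or (b s = j and b r < i). (That is, f(N^{ij}) is contained in the sum of the blocks (p, j) with p ≤ i and the blocks (i, q) with q ≥ j.) -/

import Mathlib

/-- `A` is a strictly block upper triangular matrix relative to the block function `b`
(index `r` lies in block `b r`): `A r s = 0` whenever `b r ≥ b s`. -/
def InN {F : Type*} [Field F] {n : ℕ} (b : Fin n → ℕ)
    (A : Matrix (Fin n) (Fin n) F) : Prop :=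
  ∀ r s, b s ≤ b r → A r s = 0

/-- `A` lies in the `(i,j)` block `N^{ij}`: `A r s = 0` unless `b r = i` and `b s = j`. -/
def InBlk {F : Type*} [Field F] {n : ℕ} (b : Fin n → ℕ) (i j : ℕ)
    (A : Matrix (Fin n) (Fin n) F) : Prop :=
  ∀ r s, ¬(b r = i ∧ b s = j) → A r s = 0

/-- `f` is a derivation of the Lie algebra `N` of strictly block upper triangular matrices:
it maps `N` into `N` and satisfies `f [X,Y] = [f X, Y] + [X, f Y]` on `N`,
where `[X,Y] = XY - YX`. -/
def IsDerN {F : Type*} [Field F] {n : ℕ} (b : Fin n → ℕ)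
    (f : Matrix (Fin n) (Fin n) F →ₗ[F] Matrix (Fin n) (Fin n) F) : Prop :=
  (∀ A, InN b A → InN b (f A)) ∧
  ∀ X Y, InN b X → InN b Y →
    f (X * Y - Y * X) = (f X * Y - Y * f X) + (X * f Y - f Y * X)

open Matrix

namespace Stmt11Aux

variable {F : Type*} [Field F] {n : ℕ} {b : Fin n → ℕ}

lemma inN_E {u v : Fin n} (h : b u < b v) : InN b (Matrix.single u v (1 : F)) := by
  intro r s hrs
  apply single_apply_of_ne
  rintro ⟨rfl, rfl⟩
  omega

lemma inN_of_inBlk {i j : ℕ} (hij : i < j) {A : Matrix (Fin n) (Fin n) F}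
    (hA : InBlk b i j A) : InN b A := by
  intro r s hrs
  apply hA
  rintro ⟨h1, h2⟩
  omega

lemma EmulApply (u v : Fin n) (M : Matrix (Fin n) (Fin n) F) (a c : Fin n) :
    (Matrix.single u v (1 : F) * M) a c = if a = u then M v c else 0 := by
  split_ifs with h
  · subst h; simp
  · simp [h]

lemma mulEApply (u v : Fin n) (M : Matrix (Fin n) (Fin n) F) (a c : Fin n) :
    (M * Matrix.single u v (1 : F)) a c = if c = v then M a u else 0 := by
  split_ifs with h
  · subst h; simp
  · simp [h]

/-- Core constraint coming from `[E_{uv}, A] = 0` when `b v ≠ i`, `b u ≠ j`. -/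
lemma core (f : Matrix (Fin n) (Fin n) F →ₗ[F] Matrix (Fin n) (Fin n) F)
    (hf : IsDerN b f) (i j : ℕ) (hij : i < j)
    (A : Matrix (Fin n) (Fin n) F) (hA : InBlk b i j A) (u v : Fin n)
    (huv : b u < b v) (hvi : b v ≠ i) (huj : b u ≠ j)
    (r s : Fin n) (h1 : ¬(b s = j ∧ b r < i)) (h2 : ¬(b r = i ∧ j < b s)) :
    (if r = u then f A v s else 0) = (if s = v then f A r u else 0) := by
  have hAN : InN b A := inN_of_inBlk hij hA
  have hEN : InN b (Matrix.single u v (1 : F)) := inN_E huv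
  have hfE : InN b (f (Matrix.single u v (1 : F))) := hf.1 _ hEN
  have hcomm : Matrix.single u v (1 : F) * A - A * Matrix.single u v (1 : F) = 0 := by
    ext a c
    have hv0 : A v c = 0 := hA v c (by rintro ⟨h, -⟩; exact hvi h)
    have hu0 : A a u = 0 := hA a u (by rintro ⟨-, h⟩; exact huj h)
    simp [EmulApply, mulEApply, hv0, hu0]
  have hd := hf.2 _ _ hEN hAN
  rw [hcomm, map_zero] at hd
  have he := congrFun (congrFun hd.symm r) s
  have e1 : (f (Matrix.single u v (1 : F)) * A) r s = 0 := by
    rw [Matrix.mul_apply]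
    apply Finset.sum_eq_zero
    intro k _
    by_cases hk : b k ≤ b r
    · rw [hfE r k hk, zero_mul]
    · by_cases hk2 : b k = i ∧ b s = j
      · exact absurd ⟨hk2.2, by omega⟩ h1
      · rw [hA k s hk2, mul_zero]
  have e2 : (A * f (Matrix.single u v (1 : F))) r s = 0 := by
    rw [Matrix.mul_apply]
    apply Finset.sum_eq_zero
    intro k _
    by_cases hk : b r = i ∧ b k = j
    · by_cases hks : b s ≤ b k
      · rw [hfE k s hks, mul_zero]
      · exact absurd ⟨hk.1, by omega⟩ h2
    · rw [hA r k hk, zero_mul]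
  rw [Matrix.zero_apply, Matrix.add_apply, Matrix.sub_apply, Matrix.sub_apply,
    e1, e2, EmulApply, mulEApply] at he
  linear_combination he

lemma lemA (f : Matrix (Fin n) (Fin n) F →ₗ[F] Matrix (Fin n) (Fin n) F)
    (hf : IsDerN b f) (i j : ℕ) (hij : i < j)
    (A : Matrix (Fin n) (Fin n) F) (hA : InBlk b i j A) (u v s : Fin n)
    (huv : b u < b v) (hvi : b v ≠ i) (huj : b u ≠ j)
    (h1 : ¬(b s = j ∧ b u < i)) (h2 : ¬(b u = i ∧ j < b s)) :
    f A v s = 0 := by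
  have h := core f hf i j hij A hA u v huv hvi huj u s h1 h2
  have hfA : InN b (f A) := hf.1 A (inN_of_inBlk hij hA)
  rw [if_pos rfl] at h
  have h0 : (if s = v then f A u u else 0) = 0 := by
    split_ifs
    · exact hfA u u le_rfl
    · rfl
  rw [h0] at h
  exact h

lemma lemB (f : Matrix (Fin n) (Fin n) F →ₗ[F] Matrix (Fin n) (Fin n) F)
    (hf : IsDerN b f) (i j : ℕ) (hij : i < j)
    (A : Matrix (Fin n) (Fin n) F) (hA : InBlk b i j A) (u v r : Fin n)
    (huv : b u < b v) (hvi : b v ≠ i) (huj : b u ≠ j)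
    (h1 : ¬(b v = j ∧ b r < i)) (h2 : ¬(b r = i ∧ j < b v)) :
    f A r u = 0 := by
  have h := core f hf i j hij A hA u v huv hvi huj r v h1 h2
  have hfA : InN b (f A) := hf.1 A (inN_of_inBlk hij hA)
  rw [if_pos rfl] at h
  have h0 : (if r = u then f A v v else 0) = 0 := by
    split_ifs
    · exact hfA v v le_rfl
    · rfl
  rw [h0] at h
  exact h.symm

/-- Product rule entry formula via `E_{uw} = [E_{uv}, E_{vw}]`. -/
lemma triple (f : Matrix (Fin n) (Fin n) F →ₗ[F] Matrix (Fin n) (Fin n) F)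
    (hf : IsDerN b f) (u v w : Fin n) (h1 : b u < b v) (h2 : b v < b w) (r s : Fin n) :
    f (Matrix.single u w (1 : F)) r s =
      ((if s = w then f (Matrix.single u v (1 : F)) r v else 0)
        - (if r = v then f (Matrix.single u v (1 : F)) w s else 0))
      + ((if r = u then f (Matrix.single v w (1 : F)) v s else 0)
        - (if s = v then f (Matrix.single v w (1 : F)) r u else 0)) := by
  have hwu : w ≠ u := by intro h; rw [h] at h2; omega
  have hE : Matrix.single u v (1 : F) * Matrix.single v w (1 : F)
      - Matrix.single v w (1 : F) * Matrix.single u v (1 : F)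
      = Matrix.single u w (1 : F) := by
    rw [single_mul_single_same, Matrix.single_mul_single_of_ne (h := hwu) (d := (1 : F)), one_mul, sub_zero]
  rw [← hE, hf.2 _ _ (inN_E h1) (inN_E h2)]
  rw [Matrix.add_apply, Matrix.sub_apply, Matrix.sub_apply,
    mulEApply, EmulApply, EmulApply, mulEApply]

/-- Constraint via a middle block `m` with `i < m < j`. -/
lemma keyT (f : Matrix (Fin n) (Fin n) F →ₗ[F] Matrix (Fin n) (Fin n) F)
    (hf : IsDerN b f) (i j m : ℕ) (him : i < m) (hmj : m < j)
    (A : Matrix (Fin n) (Fin n) F) (hA : InBlk b i j A) (v : Fin n) (hv : b v = m)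
    (r s : Fin n)
    (h1 : ¬(b s = j ∧ b r < m)) (h2 : ¬(b r = m ∧ j < b s))
    (h3 : ¬(b r = i ∧ m < b s)) (h4 : ¬(b s = m ∧ b r < i)) :
    f A r s = 0 := by
  conv_lhs => rw [matrix_eq_sum_single A]
  rw [map_sum, Matrix.sum_apply]
  apply Finset.sum_eq_zero
  intro u _
  rw [map_sum, Matrix.sum_apply]
  apply Finset.sum_eq_zero
  intro w _
  by_cases hA0 : A u w = 0
  · rw [hA0]; simp
  have hblk : b u = i ∧ b w = j := by
    by_contra hc
    exact hA0 (hA u w hc)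
  have huv : b u < b v := by omega
  have hvw : b v < b w := by omega
  have hfX : InN b (f (Matrix.single u v (1 : F))) := hf.1 _ (inN_E huv)
  have hfY : InN b (f (Matrix.single v w (1 : F))) := hf.1 _ (inN_E hvw)
  have hsm : Matrix.single u w (A u w) = A u w • Matrix.single u w (1 : F) := by
    rw [smul_single, smul_eq_mul, mul_one]
  rw [hsm, _root_.map_smul, Matrix.smul_apply, smul_eq_mul]
  rw [triple f hf u v w huv hvw r s]
  have t1 : (if s = w then f (Matrix.single u v (1 : F)) r v else 0) = 0 := by
    split_ifs with h
    · by_cases hle : b v ≤ b r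
      · exact hfX r v hle
      · exact absurd ⟨by rw [h]; omega, by omega⟩ h1
    · rfl
  have t2 : (if r = v then f (Matrix.single u v (1 : F)) w s else 0) = 0 := by
    split_ifs with h
    · by_cases hle : b s ≤ b w
      · exact hfX w s hle
      · exact absurd ⟨by rw [h]; omega, by omega⟩ h2
    · rfl
  have t3 : (if r = u then f (Matrix.single v w (1 : F)) v s else 0) = 0 := by
    split_ifs with h
    · by_cases hle : b s ≤ b v
      · exact hfY v s hle
      · exact absurd ⟨by rw [h]; omega, by omega⟩ h3
    · rfl
  have t4 : (if s = v then f (Matrix.single v w (1 : F)) r u else 0) = 0 := by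
    split_ifs with h
    · by_cases hle : b u ≤ b r
      · exact hfY r u hle
      · exact absurd ⟨by rw [h]; omega, by omega⟩ h4
    · rfl
  rw [t1, t2, t3, t4]
  ring

/-- char ≠ 2 argument killing the `(i+1, q)`-blocks (`q > i+2`) of `f(N^{i,i+2})`. -/
lemma charA (hchar : ringChar F ≠ 2)
    (f : Matrix (Fin n) (Fin n) F →ₗ[F] Matrix (Fin n) (Fin n) F)
    (hf : IsDerN b f) (i : ℕ)
    (A : Matrix (Fin n) (Fin n) F) (hA : InBlk b i (i + 2) A) (r s : Fin n)
    (hr : b r = i + 1) (hs : i + 2 < b s) :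
    f A r s = 0 := by
  have two0 : (2 : F) ≠ 0 := Ring.two_ne_zero hchar
  have step1 : ∀ u w s' : Fin n, b u = i → b w = i + 2 → i + 2 < b s' →
      f (Matrix.single u r (1 : F)) w s' = 0 := by
    intro u w s' hu hw hs'
    have hur : b u < b r := by omega
    have hrw : b r < b w := by omega
    have hru : r ≠ u := by intro h; rw [h] at hr; omega
    have hwu : w ≠ u := by intro h; rw [h] at hw; omega
    have hsw : s' ≠ w := by intro h; rw [h] at hs'; omega
    have hsr : s' ≠ r := by intro h; rw [h] at hs'; omega
    have hXB : Matrix.single u r (1 : F) * Matrix.single u w (1 : F)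
        - Matrix.single u w (1 : F) * Matrix.single u r (1 : F) = 0 := by
      rw [Matrix.single_mul_single_of_ne (h := hru) (d := (1 : F)), Matrix.single_mul_single_of_ne (h := hwu) (d := (1 : F)),
        sub_zero]
    have hd := hf.2 _ _ (inN_E hur) (inN_E (hur.trans hrw))
    rw [hXB, map_zero] at hd
    have he := congrFun (congrFun hd.symm u) s'
    rw [Matrix.zero_apply, Matrix.add_apply, Matrix.sub_apply, Matrix.sub_apply,
      mulEApply, EmulApply, EmulApply, mulEApply, if_neg hsw, if_pos rfl, if_pos rfl,
      if_neg hsr] at he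
    -- he : 0 = 0 - f(E u r) w s' + (f(E u w) r s' - 0)
    have htr := triple f hf u r w hur hrw r s'
    rw [if_neg hsw, if_pos rfl, if_neg hru, if_neg hsr] at htr
    -- htr : f(E u w) r s' = (0 - f(E u r) w s') + (0 - 0)
    rw [htr] at he
    have h2x : (2 : F) * f (Matrix.single u r (1 : F)) w s' = 0 := by
      linear_combination -he
    rcases mul_eq_zero.mp h2x with h | h
    · exact absurd h two0
    · exact h
  conv_lhs => rw [matrix_eq_sum_single A]
  rw [map_sum, Matrix.sum_apply]
  apply Finset.sum_eq_zero
  intro u _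
  rw [map_sum, Matrix.sum_apply]
  apply Finset.sum_eq_zero
  intro w _
  by_cases hA0 : A u w = 0
  · rw [hA0]; simp
  have hblk : b u = i ∧ b w = i + 2 := by
    by_contra hc
    exact hA0 (hA u w hc)
  have hur : b u < b r := by omega
  have hrw : b r < b w := by omega
  have hru : r ≠ u := by intro h; rw [h] at hr; omega
  have hsw : s ≠ w := by intro h; rw [h] at hs; omega
  have hsr : s ≠ r := by intro h; rw [h] at hs; omega
  have hsm : Matrix.single u w (A u w) = A u w • Matrix.single u w (1 : F) := by
    rw [smul_single, smul_eq_mul, mul_one]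
  rw [hsm, _root_.map_smul, Matrix.smul_apply, smul_eq_mul]
  rw [triple f hf u r w hur hrw r s, if_neg hsw, if_pos rfl, if_neg hru, if_neg hsr,
    step1 u w s hblk.1 hblk.2 hs]
  ring

/-- char ≠ 2 argument killing the `(p, i+1)`-blocks (`p < i`) of `f(N^{i,i+2})`. -/
lemma charB (hchar : ringChar F ≠ 2)
    (f : Matrix (Fin n) (Fin n) F →ₗ[F] Matrix (Fin n) (Fin n) F)
    (hf : IsDerN b f) (i : ℕ)
    (A : Matrix (Fin n) (Fin n) F) (hA : InBlk b i (i + 2) A) (r s : Fin n)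
    (hr : b r < i) (hs : b s = i + 1) :
    f A r s = 0 := by
  have two0 : (2 : F) ≠ 0 := Ring.two_ne_zero hchar
  have step1 : ∀ u w r' : Fin n, b u = i → b w = i + 2 → b r' < i →
      f (Matrix.single s w (1 : F)) r' u = 0 := by
    intro u w r' hu hw hr'
    have hus : b u < b s := by omega
    have hsw : b s < b w := by omega
    have hru : r' ≠ u := by intro h; rw [h] at hr'; omega
    have hrs : r' ≠ s := by intro h; rw [h] at hr'; omega
    have hws : w ≠ s := by intro h; rw [h] at hw; omega
    have hwu : w ≠ u := by intro h; rw [h] at hw; omega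
    have huw : u ≠ w := by intro h; rw [h] at hu; omega
    have hYB : Matrix.single s w (1 : F) * Matrix.single u w (1 : F)
        - Matrix.single u w (1 : F) * Matrix.single s w (1 : F) = 0 := by
      rw [Matrix.single_mul_single_of_ne (h := hwu) (d := (1 : F)), Matrix.single_mul_single_of_ne (h := hws) (d := (1 : F)),
        sub_zero]
    have hd := hf.2 _ _ (inN_E hsw) (inN_E (hus.trans hsw))
    rw [hYB, map_zero] at hd
    have he := congrFun (congrFun hd.symm r') w
    rw [Matrix.zero_apply, Matrix.add_apply, Matrix.sub_apply, Matrix.sub_apply,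
      mulEApply, EmulApply, EmulApply, mulEApply, if_pos rfl, if_neg hru, if_neg hrs,
      if_pos rfl] at he
    -- he : 0 = (f(E s w) r' u - 0) + (0 - f(E u w) r' s)
    have htr := triple f hf u s w hus hsw r' s
    rw [if_neg hws.symm, if_neg hrs, if_neg hru, if_pos rfl] at htr
    -- htr : f(E u w) r' s = (0 - 0) + (0 - f(E s w) r' u)
    rw [htr] at he
    have h2x : (2 : F) * f (Matrix.single s w (1 : F)) r' u = 0 := by
      linear_combination he
    rcases mul_eq_zero.mp h2x with h | h
    · exact absurd h two0
    · exact h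
  conv_lhs => rw [matrix_eq_sum_single A]
  rw [map_sum, Matrix.sum_apply]
  apply Finset.sum_eq_zero
  intro u _
  rw [map_sum, Matrix.sum_apply]
  apply Finset.sum_eq_zero
  intro w _
  by_cases hA0 : A u w = 0
  · rw [hA0]; simp
  have hblk : b u = i ∧ b w = i + 2 := by
    by_contra hc
    exact hA0 (hA u w hc)
  have hus : b u < b s := by omega
  have hsw : b s < b w := by omega
  have hru : r ≠ u := by intro h; rw [h] at hr; omega
  have hrs : r ≠ s := by intro h; rw [h] at hr; omega
  have hws : w ≠ s := by intro h; rw [h] at hblk; omega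
  have hsm : Matrix.single u w (A u w) = A u w • Matrix.single u w (1 : F) := by
    rw [smul_single, smul_eq_mul, mul_one]
  rw [hsm, _root_.map_smul, Matrix.smul_apply, smul_eq_mul]
  rw [triple f hf u s w hus hsw r s, if_neg hws.symm, if_neg hrs, if_neg hru, if_pos rfl,
    step1 u w r hblk.1 hblk.2 hr]
  ring

end Stmt11Aux

/-- when `char F ≠ 2`, for a derivation `f` of `N` and `1 ≤ i`, `i+1 < j ≤ t`,
the image `f(N^{ij})` lies in the blocks `(p,j)` with `p ≤ i` and `(i,q)` with `q ≥ j`. -/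
theorem stmt11 {F : Type*} [Field F] {n t : ℕ} (b : Fin n → ℕ)
    (hn : 1 ≤ n) (ht : 3 ≤ t) (hmono : Monotone b)
    (hlb : ∀ r, 1 ≤ b r) (hub : ∀ r, b r ≤ t)
    (hsurj : ∀ k, 1 ≤ k → k ≤ t → ∃ r, b r = k)
    (hchar : ringChar F ≠ 2)
    (f : Matrix (Fin n) (Fin n) F →ₗ[F] Matrix (Fin n) (Fin n) F)
    (hf : IsDerN b f)
    (i j : ℕ) (hi : 1 ≤ i) (hij : i + 1 < j) (hj : j ≤ t) :
    ∀ A, InBlk b i j A → ∀ r s,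
      ¬(b r = i ∧ j ≤ b s) → ¬(b s = j ∧ b r < i) →
      f A r s = 0 := by
  intro A hA r s hyp1 hyp2
  have hij' : i < j := by omega
  have hlbr := hlb r; have hlbs := hlb s; have hubr := hub r; have hubs := hub s
  have hAN : InN b A := Stmt11Aux.inN_of_inBlk hij' hA
  have hDN : InN b (f A) := hf.1 A hAN
  by_cases hpq : b s ≤ b r
  · exact hDN r s hpq
  push_neg at hpq
  by_cases h1 : b r = i
  · have hqj : b s < j := by
      by_contra h
      exact hyp1 ⟨h1, by omega⟩
    obtain ⟨v, hv⟩ := hsurj j (by omega) hj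
    exact Stmt11Aux.lemB f hf i j hij' A hA s v r (by omega) (by omega) (by omega)
      (by omega) (by omega)
  by_cases h2 : b s = j
  · have hpi : i < b r := by
      rcases Nat.lt_or_ge (b r) i with h | h
      · exact absurd ⟨h2, h⟩ hyp2
      · omega
    obtain ⟨u, hu⟩ := hsurj i hi (by omega)
    exact Stmt11Aux.lemA f hf i j hij' A hA u r s (by omega) (by omega) (by omega)
      (by omega) (by omega)
  by_cases hq : b s < j
  · by_cases hp : i < b r
    · obtain ⟨u, hu⟩ := hsurj i hi (by omega)
      exact Stmt11Aux.lemA f hf i j hij' A hA u r s (by omega) (by omega) (by omega)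
        (by omega) (by omega)
    · have hpi : b r < i := by omega
      by_cases hqi : b s ≤ i
      · obtain ⟨v, hv⟩ := hsurj (i + 1) (by omega) (by omega)
        exact Stmt11Aux.lemB f hf i j hij' A hA s v r (by omega) (by omega) (by omega)
          (by omega) (by omega)
      · by_cases hq1 : b s + 1 < j
        · obtain ⟨v, hv⟩ := hsurj (b s + 1) (by omega) (by omega)
          exact Stmt11Aux.lemB f hf i j hij' A hA s v r (by omega) (by omega) (by omega)
            (by omega) (by omega)
        · have hq1' : b s + 1 = j := by omega
          by_cases hp2 : 2 ≤ b r
          · obtain ⟨u, hu⟩ := hsurj (b r - 1) (by omega) (by omega)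
            exact Stmt11Aux.lemA f hf i j hij' A hA u r s (by omega) (by omega) (by omega)
              (by omega) (by omega)
          · by_cases hjt : j < t
            · obtain ⟨v, hv⟩ := hsurj (j + 1) (by omega) (by omega)
              exact Stmt11Aux.lemB f hf i j hij' A hA s v r (by omega) (by omega) (by omega)
                (by omega) (by omega)
            · by_cases him : i + 1 < b s
              · obtain ⟨v, hv⟩ := hsurj (i + 1) (by omega) (by omega)
                exact Stmt11Aux.keyT f hf i j (i + 1) (by omega) (by omega) A hA v hv r s
                  (by omega) (by omega) (by omega) (by omega)
              · have hji : j = i + 2 := by omega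
                rw [hji] at hA
                exact Stmt11Aux.charB hchar f hf i A hA r s (by omega) (by omega)
  · have hjq : j < b s := by omega
    by_cases hqt : b s < t
    · obtain ⟨v, hv⟩ := hsurj (b s + 1) (by omega) (by omega)
      exact Stmt11Aux.lemB f hf i j hij' A hA s v r (by omega) (by omega) (by omega)
        (by omega) (by omega)
    · have hqt' : b s = t := by omega
      by_cases hpi : b r < i
      · by_cases hp2 : 2 ≤ b r
        · obtain ⟨u, hu⟩ := hsurj (b r - 1) (by omega) (by omega)
          exact Stmt11Aux.lemA f hf i j hij' A hA u r s (by omega) (by omega) (by omega)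
            (by omega) (by omega)
        · obtain ⟨v, hv⟩ := hsurj (i + 1) (by omega) (by omega)
          exact Stmt11Aux.keyT f hf i j (i + 1) (by omega) (by omega) A hA v hv r s
            (by omega) (by omega) (by omega) (by omega)
      · have hip : i < b r := by omega
        by_cases hip1 : i + 1 < b r
        · obtain ⟨u, hu⟩ := hsurj (i + 1) (by omega) (by omega)
          exact Stmt11Aux.lemA f hf i j hij' A hA u r s (by omega) (by omega) (by omega)
            (by omega) (by omega)
        · by_cases hi2 : 2 ≤ i
          · obtain ⟨u, hu⟩ := hsurj (i - 1) (by omega) (by omega)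
            exact Stmt11Aux.lemA f hf i j hij' A hA u r s (by omega) (by omega) (by omega)
              (by omega) (by omega)
          · by_cases hj3 : 3 < j
            · obtain ⟨v, hv⟩ := hsurj (j - 1) (by omega) (by omega)
              exact Stmt11Aux.keyT f hf i j (j - 1) (by omega) (by omega) A hA v hv r s
                (by omega) (by omega) (by omega) (by omega)
            · have hji : j = i + 2 := by omega
              rw [hji] at hA
              exact Stmt11Aux.charA hchar f hf i A hA r s (by omega) (by omega)
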